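/- The set N = {Z ∈ ℝ⁶ : X_2 = P_2 = 0, G_1(Z) = G_2(Z) = 0} is invariant under the extended flow with γ = 0: if X_2 = P_2 = 0, R_1 = (1+μ)X_1 + μ, R_2 = (1+μ)X_1 - 1 (with R_1, R_2 ≠ 0), then the vector field U(Z) = J(Z)∇K(Z) has vanishing X_2- and P_2-components, and its R_i-components equal (1+μ)·(R⃗_iᵀẊ)/R_i, so the tangency conditions for G_1 = G_2 = 0 hold. -/

import Mathlib

open Matrix

/-- Coordinates of a point of the extended phase space ℝ⁶. -/
noncomputable def toE6 (Z : Fin 6 → ℝ) : EuclideanSpace ℝ (Fin 6) :=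
  (WithLp.equiv 2 (Fin 6 → ℝ)).symm Z

/-- The Hamiltonian `K(Z) = ‖P‖²/2 + (α/2)(γ - PᵀJR)² - 1/R₁ - μ/R₂`
with `γ = 0` and `J = [[0,-1],[1,0]]`, in coordinates
`Z = (X₁,X₂,P₁,P₂,R₁,R₂)`. -/
noncomputable def Kfun (μ α : ℝ) (W : EuclideanSpace ℝ (Fin 6)) : ℝ :=
  let w := WithLp.equiv 2 (Fin 6 → ℝ) W
  ((w 2) ^ 2 + (w 3) ^ 2) / 2
    + α / 2 * (0 - (w 2 * (-(w 1)) + w 3 * w 0)) ^ 2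
    - 1 / w 4 - μ / w 5

/-- The Poisson structure matrix `J(Z)`. -/
noncomputable def Jstruct (μ : ℝ) (Z : Fin 6 → ℝ) : Matrix (Fin 6) (Fin 6) ℝ :=
  let R1x := (1 + μ) * Z 0 + μ
  let R2x := (1 + μ) * Z 0 - 1
  let Ry := (1 + μ) * Z 1
  let A00 := (1 + μ) * R1x / Z 4
  let A10 := (1 + μ) * Ry / Z 4
  let A01 := (1 + μ) * R2x / Z 5
  let A11 := (1 + μ) * Ry / Z 5
  !![0, 0, 1, 0, 0, 0;
     0, 0, 0, 1, 0, 0;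
     -1, 0, 0, 0, -A00, -A01;
     0, -1, 0, 0, -A10, -A11;
     0, 0, A00, A10, 0, 0;
     0, 0, A01, A11, 0, 0]

@[simp] theorem cons_val_five {α : Type*} {m : ℕ} (x : α)
    (u : Fin m.succ.succ.succ.succ.succ → α) :
    Matrix.vecCons x u 5
      = Matrix.vecHead (Matrix.vecTail (Matrix.vecTail
          (Matrix.vecTail (Matrix.vecTail u)))) :=
  rfl

noncomputable abbrev prj (i : Fin 6) : EuclideanSpace ℝ (Fin 6) →L[ℝ] ℝ :=
  EuclideanSpace.proj i

/-- The Fréchet derivative of `Kfun`. -/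
theorem Kfun_hasFDerivAt (μ α : ℝ) (x : EuclideanSpace ℝ (Fin 6))
    (h4 : x 4 ≠ 0) (h5 : x 5 ≠ 0) :
    HasFDerivAt (Kfun μ α)
      ((1/2 : ℝ) • ((x 2 • prj 2 + x 2 • prj 2) + (x 3 • prj 3 + x 3 • prj 3))
        + (α/2) • ((0 - (x 2 * (-(x 1)) + x 3 * x 0)) •
              (0 - (x 2 • (-(prj 1)) + (-(x 1)) • prj 2 + (x 3 • prj 0 + x 0 • prj 3)))
            + (0 - (x 2 * (-(x 1)) + x 3 * x 0)) •
              (0 - (x 2 • (-(prj 1)) + (-(x 1)) • prj 2 + (x 3 • prj 0 + x 0 • prj 3))))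
        - ((-(x 4 ^ 2)⁻¹) • prj 4)
        - (μ • ((-(x 5 ^ 2)⁻¹) • prj 5))) x := by
  have h0 : HasFDerivAt (fun W : EuclideanSpace ℝ (Fin 6) => W 0) (prj 0) x :=
    (prj 0).hasFDerivAt
  have h1 : HasFDerivAt (fun W : EuclideanSpace ℝ (Fin 6) => W 1) (prj 1) x :=
    (prj 1).hasFDerivAt
  have h2 : HasFDerivAt (fun W : EuclideanSpace ℝ (Fin 6) => W 2) (prj 2) x :=
    (prj 2).hasFDerivAt
  have h3 : HasFDerivAt (fun W : EuclideanSpace ℝ (Fin 6) => W 3) (prj 3) x :=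
    (prj 3).hasFDerivAt
  have h4' : HasFDerivAt (fun W : EuclideanSpace ℝ (Fin 6) => W 4) (prj 4) x :=
    (prj 4).hasFDerivAt
  have h5' : HasFDerivAt (fun W : EuclideanSpace ℝ (Fin 6) => W 5) (prj 5) x :=
    (prj 5).hasFDerivAt
  have hK : Kfun μ α = fun W : EuclideanSpace ℝ (Fin 6) =>
      (1/2 : ℝ) * ((W 2) * (W 2) + (W 3) * (W 3))
      + α / 2 * ((0 - (W 2 * (-(W 1)) + W 3 * W 0)) * (0 - (W 2 * (-(W 1)) + W 3 * W 0)))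
      - (W 4)⁻¹ - μ * (W 5)⁻¹ := by
    funext W
    simp only [Kfun, div_eq_mul_inv, WithLp.equiv_apply]
    ring
  rw [hK]
  have hs : HasFDerivAt
      (fun W : EuclideanSpace ℝ (Fin 6) => 0 - (W 2 * (-(W 1)) + W 3 * W 0))
      (0 - (x 2 • (-(prj 1)) + (-(x 1)) • prj 2 + (x 3 • prj 0 + x 0 • prj 3))) x :=
    (hasFDerivAt_const (0:ℝ) x).sub ((h2.mul h1.neg).add (h3.mul h0))
  exact ((((h2.mul h2).add (h3.mul h3)).const_mul (1/2)).add
      ((hs.mul hs).const_mul (α/2))).sub (((hasDerivAt_inv h4).comp_hasFDerivAt x h4'))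
      |>.sub ((((hasDerivAt_inv h5).comp_hasFDerivAt x h5')).const_mul μ)

/-- Invariance of `N = {X₂ = P₂ = 0, G₁ = G₂ = 0}` under the extended flow
with `γ = 0`: at a point of `N` the vector field `U(Z) = J(Z)∇K(Z)` has
vanishing `X₂`- and `P₂`-components, and its `R_i`-components equal
`(1+μ)(R⃗ᵢᵀẊ)/Rᵢ`, which are the tangency conditions for `G₁ = G₂ = 0`. -/
theorem N_invariant (μ α X1 P1 : ℝ) (hμ : 0 < μ) (hα : 0 < α)
    (Z : Fin 6 → ℝ)
    (hZ : Z = ![X1, 0, P1, 0, (1 + μ) * X1 + μ, (1 + μ) * X1 - 1])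
    (hR1 : Z 4 ≠ 0) (hR2 : Z 5 ≠ 0)
    (U : Fin 6 → ℝ)
    (hU : U = Jstruct μ Z *ᵥ WithLp.equiv 2 (Fin 6 → ℝ)
        (gradient (Kfun μ α) (toE6 Z))) :
    U 1 = 0 ∧ U 3 = 0
    ∧ U 4 = (1 + μ) * ((((1 + μ) * Z 0 + μ) * U 0 + (1 + μ) * Z 1 * U 1) / Z 4)
    ∧ U 5 = (1 + μ) * ((((1 + μ) * Z 0 - 1) * U 0 + (1 + μ) * Z 1 * U 1) / Z 5) := by
  -- the point in Euclidean space
  set x : EuclideanSpace ℝ (Fin 6) := toE6 Z with hx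
  have hxZ : ∀ i, x i = Z i := fun i => rfl
  have h4 : x 4 ≠ 0 := hR1
  have h5 : x 5 ≠ 0 := hR2
  have hF := Kfun_hasFDerivAt μ α x h4 h5
  set L := ((1/2 : ℝ) • ((x 2 • prj 2 + x 2 • prj 2) + (x 3 • prj 3 + x 3 • prj 3))
        + (α/2) • ((0 - (x 2 * (-(x 1)) + x 3 * x 0)) •
              (0 - (x 2 • (-(prj 1)) + (-(x 1)) • prj 2 + (x 3 • prj 0 + x 0 • prj 3)))
            + (0 - (x 2 * (-(x 1)) + x 3 * x 0)) •
              (0 - (x 2 • (-(prj 1)) + (-(x 1)) • prj 2 + (x 3 • prj 0 + x 0 • prj 3))))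
        - ((-(x 4 ^ 2)⁻¹) • prj 4)
        - (μ • ((-(x 5 ^ 2)⁻¹) • prj 5))) with hL
  have hg : gradient (Kfun μ α) x
      = (InnerProductSpace.toDual ℝ (EuclideanSpace ℝ (Fin 6))).symm L :=
    (hasFDerivAt_iff_hasGradientAt.mp hF).gradient
  have hcomp : ∀ j : Fin 6,
      WithLp.equiv 2 (Fin 6 → ℝ) (gradient (Kfun μ α) x) j
        = L (EuclideanSpace.single j (1:ℝ)) := by
    intro j
    rw [hg]
    have h1 : WithLp.equiv 2 (Fin 6 → ℝ)
        ((InnerProductSpace.toDual ℝ (EuclideanSpace ℝ (Fin 6))).symm L) j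
        = @inner ℝ _ _
            ((InnerProductSpace.toDual ℝ (EuclideanSpace ℝ (Fin 6))).symm L)
            (EuclideanSpace.single j (1:ℝ)) := by
      rw [EuclideanSpace.inner_single_right]
      simp
    rw [h1, InnerProductSpace.toDual_symm_apply]
  -- concrete coordinate values
  have hx0 : x 0 = X1 := by rw [hxZ, hZ]; rfl
  have hx1 : x 1 = 0 := by rw [hxZ, hZ]; rfl
  have hx2 : x 2 = P1 := by rw [hxZ, hZ]; rfl
  have hx3 : x 3 = 0 := by rw [hxZ, hZ]; rfl
  -- gradient components
  have hs0 : L (EuclideanSpace.single (0 : Fin 6) (1:ℝ)) = 0 := by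
    rw [hL]
    simp only [ContinuousLinearMap.add_apply, ContinuousLinearMap.sub_apply,
      ContinuousLinearMap.smul_apply, ContinuousLinearMap.neg_apply,
      ContinuousLinearMap.zero_apply, zero_sub, PiLp.proj_apply,
      smul_eq_mul, hx0, hx1, hx2, hx3]
    simp [EuclideanSpace.single_apply]
    try ring
  have hs1 : L (EuclideanSpace.single (1 : Fin 6) (1:ℝ)) = 0 := by
    rw [hL]
    simp only [ContinuousLinearMap.add_apply, ContinuousLinearMap.sub_apply,
      ContinuousLinearMap.smul_apply, ContinuousLinearMap.neg_apply,
      ContinuousLinearMap.zero_apply, zero_sub, PiLp.proj_apply,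
      smul_eq_mul, hx0, hx1, hx2, hx3]
    simp [EuclideanSpace.single_apply]
    try ring
  have hs2 : L (EuclideanSpace.single (2 : Fin 6) (1:ℝ)) = P1 := by
    rw [hL]
    simp only [ContinuousLinearMap.add_apply, ContinuousLinearMap.sub_apply,
      ContinuousLinearMap.smul_apply, ContinuousLinearMap.neg_apply,
      ContinuousLinearMap.zero_apply, zero_sub, PiLp.proj_apply,
      smul_eq_mul, hx0, hx1, hx2, hx3]
    simp [EuclideanSpace.single_apply]
    try ring
  have hs3 : L (EuclideanSpace.single (3 : Fin 6) (1:ℝ)) = 0 := by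
    rw [hL]
    simp only [ContinuousLinearMap.add_apply, ContinuousLinearMap.sub_apply,
      ContinuousLinearMap.smul_apply, ContinuousLinearMap.neg_apply,
      ContinuousLinearMap.zero_apply, zero_sub, PiLp.proj_apply,
      smul_eq_mul, hx0, hx1, hx2, hx3]
    simp [EuclideanSpace.single_apply]
    try ring
  have hs4 : L (EuclideanSpace.single (4 : Fin 6) (1:ℝ)) = (x 4 ^ 2)⁻¹ := by
    rw [hL]
    simp only [ContinuousLinearMap.add_apply, ContinuousLinearMap.sub_apply,
      ContinuousLinearMap.smul_apply, ContinuousLinearMap.neg_apply,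
      ContinuousLinearMap.zero_apply, zero_sub, PiLp.proj_apply,
      smul_eq_mul, hx0, hx1, hx2, hx3]
    simp [EuclideanSpace.single_apply]
    try ring
  have hs5 : L (EuclideanSpace.single (5 : Fin 6) (1:ℝ)) = μ * (x 5 ^ 2)⁻¹ := by
    rw [hL]
    simp only [ContinuousLinearMap.add_apply, ContinuousLinearMap.sub_apply,
      ContinuousLinearMap.smul_apply, ContinuousLinearMap.neg_apply,
      ContinuousLinearMap.zero_apply, zero_sub, PiLp.proj_apply,
      smul_eq_mul, hx0, hx1, hx2, hx3]
    simp [EuclideanSpace.single_apply]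
    try ring
  have hv0 : gradient (Kfun μ α) x (0 : Fin 6) = 0 :=
    (hcomp 0).trans hs0
  have hv1 : gradient (Kfun μ α) x (1 : Fin 6) = 0 :=
    (hcomp 1).trans hs1
  have hv2 : gradient (Kfun μ α) x (2 : Fin 6) = P1 :=
    (hcomp 2).trans hs2
  have hv3 : gradient (Kfun μ α) x (3 : Fin 6) = 0 :=
    (hcomp 3).trans hs3
  have hv4 : gradient (Kfun μ α) x (4 : Fin 6) = (x 4 ^ 2)⁻¹ :=
    (hcomp 4).trans hs4
  have hv5 : gradient (Kfun μ α) x (5 : Fin 6) = μ * (x 5 ^ 2)⁻¹ :=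
    (hcomp 5).trans hs5
  -- now everything is explicit
  have hZ0 : Z 0 = X1 := by rw [hZ]; rfl
  have hZ1 : Z 1 = 0 := by rw [hZ]; rfl
  have hU0 : U 0 = P1 := by
    rw [hU]
    simp [Jstruct, Matrix.mulVec, dotProduct, Matrix.vecHead, Matrix.vecTail, Fin.sum_univ_six,
      hv0, hv1, hv2, hv3, hv4, hv5]
  have hU1 : U 1 = 0 := by
    rw [hU]
    simp [Jstruct, Matrix.mulVec, dotProduct, Matrix.vecHead, Matrix.vecTail, Fin.sum_univ_six,
      hv0, hv1, hv2, hv3, hv4, hv5]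
  have hU3 : U 3 = 0 := by
    rw [hU]
    simp [Jstruct, Matrix.mulVec, dotProduct, Matrix.vecHead, Matrix.vecTail, Fin.sum_univ_six,
      hv0, hv1, hv2, hv3, hv4, hv5, hZ1]
  have hU4 : U 4 = (1 + μ) * ((1 + μ) * Z 0 + μ) / Z 4 * P1 := by
    rw [hU]
    simp [Jstruct, Matrix.mulVec, dotProduct, Matrix.vecHead, Matrix.vecTail, Fin.sum_univ_six,
      hv0, hv1, hv2, hv3, hv4, hv5, hZ1]
  have hU5 : U 5 = (1 + μ) * ((1 + μ) * Z 0 - 1) / Z 5 * P1 := by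
    rw [hU]
    simp [Jstruct, Matrix.mulVec, dotProduct, Matrix.vecHead, Matrix.vecTail, Fin.sum_univ_six,
      hv0, hv1, hv2, hv3, hv4, hv5, hZ1]
  refine ⟨hU1, hU3, ?_, ?_⟩
  · rw [hU4, hU0, hU1, hZ1]; ring
  · rw [hU5, hU0, hU1, hZ1]; ring
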